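/- arXiv:2009.07417 — 3 statements merged into one kernel-verified Lean document; each statement's English description precedes it below -/
import Mathlib

section
/- Let S be an m-draw uniform random sample from a finite nonempty set X ⊆ ℝ^d and let c(S) be the sample mean. Then for any δ ∈ (0,1), with probability at least 1 − δ, ∑_{x∈X} ‖x − c(S)‖² ≤ (1 + 1/(mδ)) · ∑_{x∈X} ‖x − c(X)‖². -/
open MeasureTheory ProbabilityTheory

private lemma eu_norm_sq' {d : ℕ} (y : EuclideanSpace ℝ (Fin d)) : ‖y‖^2 = ∑ k, (y k)^2 := by
  rw [EuclideanSpace.norm_eq, Real.sq_sqrt (by positivity)]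
  simp [Real.norm_eq_abs, sq_abs]

private lemma eu_sum_apply' {d : ℕ} {α : Type*} (s : Finset α)
    (V : α → EuclideanSpace ℝ (Fin d)) (k : Fin d) :
    (∑ i ∈ s, V i) k = ∑ i ∈ s, V i k := by
  induction s using Finset.cons_induction with
  | empty => rfl
  | cons a s ha ih => rw [Finset.sum_cons, Finset.sum_cons, ← ih]; rfl

private lemma eu_coord_le_norm {d : ℕ} (y : EuclideanSpace ℝ (Fin d)) (k : Fin d) :
    |y k| ≤ ‖y‖ := by
  have h1 : (y k)^2 ≤ ‖y‖^2 := by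
    rw [eu_norm_sq']
    exact Finset.single_le_sum (fun i _ => sq_nonneg (y i)) (Finset.mem_univ k)
  calc |y k| = Real.sqrt ((y k)^2) := (Real.sqrt_sq_eq_abs _).symm
    _ ≤ Real.sqrt (‖y‖^2) := Real.sqrt_le_sqrt h1
    _ = ‖y‖ := by rw [Real.sqrt_sq (norm_nonneg y)]

private lemma sum_sq_shift' {α : Type*} (s : Finset α) (g : α → ℝ) (c b : ℝ)
    (h : ∑ x ∈ s, (g x - c) = 0) :
    ∑ x ∈ s, (g x - b)^2 = ∑ x ∈ s, (g x - c)^2 + s.card * (c - b)^2 := by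
  have he : ∀ x, (g x - b)^2 = ((g x - c)^2 + (c - b)^2) + 2*(c-b)*(g x - c) := by
    intro x; ring
  simp only [he, Finset.sum_add_distrib, ← Finset.mul_sum, h, Finset.sum_const, nsmul_eq_mul]
  ring

private lemma exp_unif' {d : ℕ} {Ω : Type*} [MeasureSpace Ω] (μ : Measure Ω)
    (X : Finset (EuclideanSpace ℝ (Fin d)))
    (W : Ω → EuclideanSpace ℝ (Fin d)) (hW : Measurable W)
    (hu : Measure.map W μ = (X.card : ENNReal)⁻¹ • ∑ x ∈ X, Measure.dirac x)
    (g : EuclideanSpace ℝ (Fin d) → ℝ) (hg : Measurable g) :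
    ∫ ω, g (W ω) ∂μ = (X.card : ℝ)⁻¹ * ∑ x ∈ X, g x := by
  rw [← integral_map hW.aemeasurable hg.aestronglyMeasurable, hu,
    integral_smul_measure, integral_finset_sum_measure (fun x _ =>
      (integrable_const (g x)).congr (ae_eq_dirac g).symm)]
  simp [integral_dirac]

private lemma ae_mem' {d : ℕ} {Ω : Type*} [MeasureSpace Ω] (μ : Measure Ω)
    [IsProbabilityMeasure μ]
    (X : Finset (EuclideanSpace ℝ (Fin d))) (hX : X.Nonempty)
    (W : Ω → EuclideanSpace ℝ (Fin d)) (hW : Measurable W)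
    (hu : Measure.map W μ = (X.card : ENNReal)⁻¹ • ∑ x ∈ X, Measure.dirac x) :
    ∀ᵐ ω ∂μ, W ω ∈ X := by
  have h1 : Measure.map W μ (X : Set _) = 1 := by
    rw [hu]
    simp only [Measure.smul_apply, Measure.finset_sum_apply, smul_eq_mul]
    rw [Finset.sum_congr rfl (fun x hx => by
      rw [Measure.dirac_apply' _ (X.measurableSet), Set.indicator_of_mem (by exact_mod_cast hx)])]
    simp only [Pi.one_apply, Finset.sum_const, nsmul_eq_mul, mul_one]
    rw [ENNReal.inv_mul_cancel
      (by exact_mod_cast Nat.cast_ne_zero.mpr (Finset.card_ne_zero.mpr hX)) (by simp)]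
  have hpre : μ (W ⁻¹' X) = 1 :=
    (Measure.map_apply hW (X.measurableSet : MeasurableSet (X : Set _))).symm.trans h1
  have h2 : μ (W ⁻¹' X)ᶜ = 0 := by
    rw [measure_compl (hW X.measurableSet) (measure_ne_top μ _), measure_univ, hpre]; simp
  filter_upwards [measure_eq_zero_iff_ae_notMem.mp h2] with ω hω using not_not.mp hω

/-- Lemma 2 of the paper: for an `m`-draw uniform random sample `S` from a
finite nonempty `X ⊆ ℝ^d` with sample mean `c(S)`, for any `δ ∈ (0,1)`, with
probability at least `1 − δ`,
`∑_{x∈X} ‖x − c(S)‖² ≤ (1 + 1/(mδ)) ∑_{x∈X} ‖x − c(X)‖²`. -/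
theorem sample_mean_cost_bound {d m : ℕ} (hm : 0 < m)
    {Ω : Type*} [MeasureSpace Ω] (μ : Measure Ω) [IsProbabilityMeasure μ]
    (X : Finset (EuclideanSpace ℝ (Fin d))) (hX : X.Nonempty)
    (V : Fin m → Ω → EuclideanSpace ℝ (Fin d))
    (hmeas : ∀ i, Measurable (V i))
    (hindep : iIndepFun V μ)
    (hunif : ∀ i, Measure.map (V i) μ =
      (X.card : ENNReal)⁻¹ • ∑ x ∈ X, Measure.dirac x)
    (cX : EuclideanSpace ℝ (Fin d)) (hcX : cX = (X.card : ℝ)⁻¹ • ∑ x ∈ X, x)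
    (δ : ℝ) (hδ0 : 0 < δ) (hδ1 : δ < 1) :
    1 - ENNReal.ofReal δ ≤
      μ {ω | ∑ x ∈ X, ‖x - ((m : ℝ)⁻¹ • ∑ i, V i ω)‖ ^ 2 ≤
        (1 + (m * δ)⁻¹) * ∑ x ∈ X, ‖x - cX‖ ^ 2} := by
  classical
  set N : ℝ := (X.card : ℝ) with hN
  have hNpos : 0 < N := by exact Nat.cast_pos.mpr (Finset.card_pos.mpr hX)
  have hmpos : (0:ℝ) < (m:ℝ) := by exact_mod_cast hm
  -- coordinate sums of X around cX vanish
  have hzero : ∀ k, ∑ x ∈ X, (x k - cX k) = 0 := by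
    intro k
    have hcXk : cX k = N⁻¹ * (∑ x ∈ X, x) k := by rw [hcX]; rfl
    have hsumk : (∑ x ∈ X, x) k = ∑ x ∈ X, x k := eu_sum_apply' X _ k
    rw [Finset.sum_sub_distrib, Finset.sum_const, nsmul_eq_mul, hcXk, hsumk]
    field_simp
    simp [hN]
  -- centroid identity
  set Φ : ℝ := ∑ x ∈ X, ‖x - cX‖ ^ 2 with hΦ
  have hΦ' : Φ = ∑ k, ∑ x ∈ X, (x k - cX k)^2 := by
    rw [hΦ, Finset.sum_comm]
    refine Finset.sum_congr rfl fun x _ => ?_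
    rw [eu_norm_sq']
    refine Finset.sum_congr rfl fun k _ => ?_
    congr 1
  have hΦnn : 0 ≤ Φ := Finset.sum_nonneg fun x _ => by positivity
  have centroid : ∀ y : EuclideanSpace ℝ (Fin d),
      ∑ x ∈ X, ‖x - y‖ ^ 2 = Φ + N * ‖y - cX‖ ^ 2 := by
    intro y
    have h1 : ∑ x ∈ X, ‖x - y‖ ^ 2 = ∑ k, ∑ x ∈ X, (x k - y k)^2 := by
      rw [Finset.sum_comm]
      refine Finset.sum_congr rfl fun x _ => ?_
      rw [eu_norm_sq']
      refine Finset.sum_congr rfl fun k _ => ?_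
      congr 1
    rw [h1, hΦ']
    have h2 : ∀ k, ∑ x ∈ X, (x k - y k)^2
        = ∑ x ∈ X, (x k - cX k)^2 + N * (cX k - y k)^2 := fun k =>
      sum_sq_shift' X (fun x => x k) (cX k) (y k) (hzero k)
    simp only [h2, Finset.sum_add_distrib, ← Finset.mul_sum]
    congr 1
    rw [eu_norm_sq']
    congr 1
    refine Finset.sum_congr rfl fun k _ => ?_
    have : (y - cX) k = y k - cX k := rfl
    rw [this]; ring
  -- the coordinate deviation functions
  set a : Fin m → Fin d → Ω → ℝ := fun i k ω => V i ω k - cX k with ha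
  have hameas : ∀ i k, Measurable (a i k) := fun i k =>
    (((measurable_pi_apply k).comp (WithLp.measurable_ofLp 2 _)).comp (hmeas i)).sub measurable_const
  set C : ℝ := X.sup' hX (fun x => ‖x - cX‖) with hC
  have habound : ∀ i k, ∀ᵐ ω ∂μ, |a i k ω| ≤ C := by
    intro i k
    filter_upwards [ae_mem' μ X hX (V i) (hmeas i) (hunif i)] with ω hω
    calc |a i k ω| = |(V i ω - cX) k| := rfl
      _ ≤ ‖V i ω - cX‖ := eu_coord_le_norm _ k
      _ ≤ C := Finset.le_sup' (fun x => ‖x - cX‖) hω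
  -- integrability of products
  have hInt : ∀ i j k, Integrable (fun ω => a i k ω * a j k ω) μ := by
    intro i j k
    refine Integrable.mono' (integrable_const (C * C))
      ((hameas i k).mul (hameas j k)).aestronglyMeasurable ?_
    filter_upwards [habound i k, habound j k] with ω h1 h2
    calc ‖a i k ω * a j k ω‖ = |a i k ω| * |a j k ω| := abs_mul _ _
      _ ≤ C * C := by
        have h0 : 0 ≤ |a i k ω| := abs_nonneg _
        exact mul_le_mul h1 h2 (abs_nonneg _) (le_trans h0 h1)
  -- expectations
  have hEzero : ∀ i k, ∫ ω, a i k ω ∂μ = 0 := by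
    intro i k
    have : (fun ω => a i k ω) = fun ω => (fun y : EuclideanSpace ℝ (Fin d) => y k - cX k) (V i ω) := rfl
    rw [this, exp_unif' μ X (V i) (hmeas i) (hunif i) (fun y : EuclideanSpace ℝ (Fin d) => y k - cX k)
      (((measurable_pi_apply k).comp (WithLp.measurable_ofLp 2 _)).sub measurable_const), hzero k, mul_zero]
  have hEdiag : ∀ i k, ∫ ω, a i k ω * a i k ω ∂μ = N⁻¹ * ∑ x ∈ X, (x k - cX k)^2 := by
    intro i k
    have : (fun ω => a i k ω * a i k ω)
        = fun ω => (fun y : EuclideanSpace ℝ (Fin d) => (y k - cX k) * (y k - cX k)) (V i ω) := rfl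
    rw [this, exp_unif' μ X (V i) (hmeas i) (hunif i)
      (fun y : EuclideanSpace ℝ (Fin d) => (y k - cX k) * (y k - cX k))
      ((((measurable_pi_apply k).comp (WithLp.measurable_ofLp 2 _)).sub measurable_const).mul
        (((measurable_pi_apply k).comp (WithLp.measurable_ofLp 2 _)).sub measurable_const))]
    congr 1
    exact Finset.sum_congr rfl fun x _ => (sq (x k - cX k)).symm ▸ by ring
  have hEcross : ∀ i j k, i ≠ j → ∫ ω, a i k ω * a j k ω ∂μ = 0 := by
    intro i j k hij
    have hind : IndepFun (a i k) (a j k) μ :=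
      (hindep.indepFun hij).comp (((measurable_pi_apply k).comp (WithLp.measurable_ofLp 2 _)).sub measurable_const)
        (((measurable_pi_apply k).comp (WithLp.measurable_ofLp 2 _)).sub measurable_const)
    have : ∫ ω, a i k ω * a j k ω ∂μ = ∫ ω, (a i k * a j k) ω ∂μ := rfl
    rw [this, IndepFun.integral_mul_eq_mul_integral hind (hameas i k).aestronglyMeasurable
      (hameas j k).aestronglyMeasurable, hEzero i k, hEzero j k, mul_zero]
  -- the sample mean deviation
  set f : Ω → ℝ := fun ω => ‖((m : ℝ)⁻¹ • ∑ i, V i ω) - cX‖ ^ 2 with hf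
  have hfexp : ∀ ω, f ω = ∑ k, ((m:ℝ))⁻¹^2 * ∑ i, ∑ j, a i k ω * a j k ω := by
    intro ω
    show ‖((m : ℝ)⁻¹ • ∑ i, V i ω) - cX‖ ^ 2 = _
    rw [eu_norm_sq']
    refine Finset.sum_congr rfl fun k _ => ?_
    have h1 : (((m : ℝ)⁻¹ • ∑ i, V i ω) - cX) k = (m:ℝ)⁻¹ * ∑ i, a i k ω := by
      have h2 : (((m : ℝ)⁻¹ • ∑ i, V i ω) - cX) k
          = (m:ℝ)⁻¹ * (∑ i, V i ω) k - cX k := rfl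
      rw [h2, eu_sum_apply' Finset.univ (fun i => V i ω) k]
      have h3 : ∑ i, a i k ω = (∑ i, V i ω k) - m * cX k := by
        rw [ha]
        simp [Finset.sum_sub_distrib]
      rw [h3]
      field_simp
    rw [h1, mul_pow, sq (∑ i, a i k ω), Finset.sum_mul_sum]
  have hfmeas : Measurable f := by
    apply Measurable.pow_const
    exact (measurable_norm.comp (((measurable_const_smul ((m:ℝ)⁻¹)).comp
      (Finset.measurable_sum Finset.univ (fun i _ => hmeas i))).sub measurable_const))
  have hfint : Integrable f μ := by
    rw [funext hfexp]
    exact integrable_finset_sum _ fun k _ =>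
      ((integrable_finset_sum _ fun i _ => integrable_finset_sum _ fun j _ =>
        hInt i j k).const_mul _)
  have hEf : ∫ ω, f ω ∂μ = (m:ℝ)⁻¹ * N⁻¹ * Φ := by
    rw [funext hfexp, integral_finset_sum _ (fun k _ =>
      ((integrable_finset_sum _ fun i _ => integrable_finset_sum _ fun j _ =>
        hInt i j k).const_mul _))]
    have step : ∀ k : Fin d, ∫ ω, ((m:ℝ))⁻¹^2 * ∑ i, ∑ j, a i k ω * a j k ω ∂μ
        = (m:ℝ)⁻¹ * N⁻¹ * ∑ x ∈ X, (x k - cX k)^2 := by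
      intro k
      rw [integral_const_mul, integral_finset_sum _ (fun i _ =>
        integrable_finset_sum _ fun j _ => hInt i j k)]
      have hin : ∀ i : Fin m, ∫ ω, ∑ j, a i k ω * a j k ω ∂μ
          = N⁻¹ * ∑ x ∈ X, (x k - cX k)^2 := by
        intro i
        rw [integral_finset_sum _ (fun j _ => hInt i j k)]
        rw [Finset.sum_eq_single i (fun j _ hj => hEcross i j k (Ne.symm hj))
          (fun h => absurd (Finset.mem_univ i) h)]
        exact hEdiag i k
      simp only [hin, Finset.sum_const, Finset.card_univ, Fintype.card_fin, nsmul_eq_mul]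
      field_simp
    rw [Finset.sum_congr rfl fun k _ => step k, ← Finset.mul_sum, ← hΦ']
  -- Markov argument
  set ε : ℝ := ((m:ℝ) * δ)⁻¹ * Φ with hε
  set A : Set Ω := {ω | N * f ω ≤ ε} with hA
  have hAmeas : MeasurableSet A :=
    measurableSet_le ((measurable_const.mul hfmeas)) measurable_const
  have hfnn : ∀ ω, 0 ≤ f ω := fun ω => by positivity
  have hcompl : μ Aᶜ ≤ ENNReal.ofReal δ := by
    rcases eq_or_lt_of_le hΦnn with hΦ0 | hΦpos
    · -- Φ = 0 : f = 0 a.e.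
      have hEf0 : ∫ ω, f ω ∂μ = 0 := by rw [hEf, ← hΦ0, mul_zero]
      have hf0 : f =ᵐ[μ] 0 :=
        (integral_eq_zero_iff_of_nonneg hfnn hfint).mp hEf0
      have : μ Aᶜ = 0 := by
        refine measure_mono_null ?_ (by
          have : ∀ᵐ ω ∂μ, ω ∈ A := by
            filter_upwards [hf0] with ω hω
            show N * f ω ≤ ε
            rw [hε, ← hΦ0, mul_zero]
            simp only [Pi.zero_apply] at hω
            rw [hω, mul_zero]
          exact ae_iff.mp this)
        intro ω hω
        exact hω
      rw [this]; exact zero_le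
    · -- Φ > 0
      have hεpos : 0 < ε := by
        apply mul_pos _ hΦpos
        rw [inv_pos]; positivity
      have hmark := mul_meas_ge_le_integral_of_nonneg
        (f := fun ω => N * f ω)
        (Filter.Eventually.of_forall fun ω => mul_nonneg (le_of_lt hNpos) (hfnn ω))
        (hfint.const_mul N) ε
      rw [integral_const_mul, hEf] at hmark
      have hval : N * ((m:ℝ)⁻¹ * N⁻¹ * Φ) = (m:ℝ)⁻¹ * Φ := by
        field_simp
      rw [hval] at hmark
      have hsub : Aᶜ ⊆ {ω | ε ≤ N * f ω} := by
        intro ω hω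
        simp only [hA, Set.mem_compl_iff, Set.mem_setOf_eq, not_le] at hω
        exact le_of_lt hω
      have h1 : μ Aᶜ ≤ μ {ω | ε ≤ N * f ω} := measure_mono hsub
      have h2 : (μ {ω | ε ≤ N * f ω}).toReal ≤ δ := by
        have hT : (μ {ω | ε ≤ N * f ω}).toReal ≤ ((m:ℝ)⁻¹ * Φ) / ε :=
          (le_div_iff₀ hεpos).mpr (by rw [mul_comm]; exact hmark)
        have heq : ((m:ℝ)⁻¹ * Φ) / ε = δ := by
          rw [hε]
          rw [div_eq_iff (by positivity : ((m:ℝ) * δ)⁻¹ * Φ ≠ 0)]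
          field_simp
        rw [heq] at hT
        exact hT
      calc μ Aᶜ ≤ μ {ω | ε ≤ N * f ω} := h1
        _ = ENNReal.ofReal ((μ {ω | ε ≤ N * f ω}).toReal) :=
          (ENNReal.ofReal_toReal (measure_ne_top μ _)).symm
        _ ≤ ENNReal.ofReal δ := ENNReal.ofReal_le_ofReal h2
  -- conclude
  have hAsub : A ⊆ {ω | ∑ x ∈ X, ‖x - ((m : ℝ)⁻¹ • ∑ i, V i ω)‖ ^ 2 ≤
      (1 + ((m:ℝ) * δ)⁻¹) * ∑ x ∈ X, ‖x - cX‖ ^ 2} := by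
    intro ω hω
    show ∑ x ∈ X, ‖x - ((m : ℝ)⁻¹ • ∑ i, V i ω)‖ ^ 2 ≤ (1 + ((m:ℝ) * δ)⁻¹) * Φ
    rw [centroid ((m : ℝ)⁻¹ • ∑ i, V i ω)]
    have : N * f ω ≤ ε := hω
    rw [add_mul, one_mul]
    exact add_le_add_right (le_trans this (le_of_eq rfl)) Φ
  have hfinal : 1 - ENNReal.ofReal δ ≤ μ A := by
    rw [tsub_le_iff_right]
    calc (1 : ENNReal) = μ A + μ Aᶜ := by
          rw [← measure_univ (μ := μ)]; exact (measure_add_measure_compl hAmeas).symm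
      _ ≤ μ A + ENNReal.ofReal δ := add_le_add_right hcompl _
  exact le_trans hfinal (measure_mono hAsub)
end

section
/- Optimal balanced assignment equals minimum-cost flow value: with the flow network of the balanced clustering construction, the minimum over all assignments σ: X → C satisfying l ≤ |σ⁻¹(j)| ≤ u of ∑_{x∈X} ‖x − σ(x)‖² equals the minimum cost of a flow of value |X| in the network. -/
open scoped Classical

/-- A feasible assignment for balanced clustering: each point of `X` is sent
to a center in `C`, and every center receives between `l` and `u` points. -/
def IsFeasibleAssignment {d : ℕ} (X C : Finset (EuclideanSpace ℝ (Fin d)))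
    (l u : ℕ) (σ : EuclideanSpace ℝ (Fin d) → EuclideanSpace ℝ (Fin d)) : Prop :=
  (∀ x ∈ X, σ x ∈ C) ∧
    ∀ c ∈ C, l ≤ (X.filter (fun x => σ x = c)).card ∧
      (X.filter (fun x => σ x = c)).card ≤ u

/-- A feasible flow of value `|X|` in the balanced-clustering network, recorded
by its values on the middle edges `x → c`. -/
def IsFeasibleFlow {d : ℕ} (X C : Finset (EuclideanSpace ℝ (Fin d)))
    (l u : ℕ) (f : EuclideanSpace ℝ (Fin d) → EuclideanSpace ℝ (Fin d) → ℝ) : Prop :=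
  (∀ x ∈ X, ∀ c ∈ C, 0 ≤ f x c ∧ f x c ≤ 1) ∧
    (∀ x ∈ X, ∑ c ∈ C, f x c = 1) ∧
    ∀ c ∈ C, (l : ℝ) ≤ ∑ x ∈ X, f x c ∧ ∑ x ∈ X, f x c ≤ (u : ℝ)

open Finset

lemma card_filter_lt_fin {u l : ℕ} (hlu : l ≤ u) :
    ((Finset.univ : Finset (Fin u)).filter (fun i : Fin u => (i : ℕ) < l)).card = l := by
  have : (Finset.univ : Finset (Fin u)).filter (fun i : Fin u => (i : ℕ) < l)
      = (Finset.univ : Finset (Fin l)).map ⟨Fin.castLE hlu, Fin.castLE_injective hlu⟩ := by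
    ext i
    simp only [mem_filter, mem_univ, true_and, mem_map, Function.Embedding.coeFn_mk]
    constructor
    · intro h; exact ⟨⟨i, h⟩, rfl⟩
    · rintro ⟨j, rfl⟩; exact j.2
  rw [this, Finset.card_map, Finset.card_univ, Fintype.card_fin]

lemma sum_ite_fin {u l : ℕ} (hlu : l ≤ u) (a b : ℝ) :
    ∑ i : Fin u, (if (i : ℕ) < l then a else b) = l * a + ((u : ℝ) - l) * b := by
  rw [Finset.sum_ite, Finset.sum_const, Finset.sum_const, card_filter_lt_fin hlu,
    Finset.filter_not, Finset.card_sdiff_of_subset (Finset.filter_subset _ _), card_filter_lt_fin hlu]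
  simp [nsmul_eq_mul, Nat.cast_sub hlu]

lemma rounding {d k : ℕ} (X C : Finset (EuclideanSpace ℝ (Fin d))) (hC : C.card = k)
    (l u : ℕ) (hl : 0 < l) (hlu : l ≤ u)
    (hlow : k * l ≤ X.card) (hup : X.card ≤ k * u)
    (hX : X.Nonempty)
    (f : EuclideanSpace ℝ (Fin d) → EuclideanSpace ℝ (Fin d) → ℝ)
    (hf : IsFeasibleFlow X C l u f) :
    ∃ σ, IsFeasibleAssignment X C l u σ ∧
      ∑ x ∈ X, ‖x - σ x‖ ^ 2 ≤ ∑ x ∈ X, ∑ c ∈ C, f x c * ‖x - c‖ ^ 2 := by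
  classical
  obtain ⟨hf01, hfrow, hfcol⟩ := hf
  have hk : 0 < k := by
    rcases Nat.eq_zero_or_pos k with rfl | h
    · simp only [Nat.zero_mul] at hup
      exact absurd (Finset.card_eq_zero.mp (Nat.le_zero.mp hup)) hX.ne_empty
    · exact h
  have hcard : Fintype.card ({c // c ∈ C} × Fin u)
      = Fintype.card ({x // x ∈ X} ⊕ Fin (k * u - X.card)) := by
    simp only [Fintype.card_prod, Fintype.card_coe, Fintype.card_sum, Fintype.card_fin, hC]
    omega
  let e : ({c // c ∈ C} × Fin u) ≃ ({x // x ∈ X} ⊕ Fin (k * u - X.card)) :=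
    Fintype.equivOfCardEq hcard
  set F : EuclideanSpace ℝ (Fin d) → ℝ := fun c => ∑ x ∈ X, f x c with hF
  have hFl : ∀ c ∈ C, (l : ℝ) ≤ F c := fun c hc => (hfcol c hc).1
  have hFu : ∀ c ∈ C, F c ≤ (u : ℝ) := fun c hc => (hfcol c hc).2
  have hFpos : ∀ c ∈ C, 0 < F c := fun c hc =>
    lt_of_lt_of_le (by exact_mod_cast hl) (hFl c hc)
  set DR : ℝ := ((k * u - X.card : ℕ) : ℝ) with hDR
  set m : ({x // x ∈ X} ⊕ Fin (k * u - X.card)) → ({c // c ∈ C} × Fin u) → ℝ := fun i p =>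
    match i with
    | Sum.inl x => if ((p.2 : ℕ) < l) then f x p.1 / F p.1
        else f x p.1 * (F p.1 - l) / (F p.1 * ((u : ℝ) - l))
    | Sum.inr _ => if ((p.2 : ℕ) < l) then 0
        else ((u : ℝ) - F p.1) / (((u : ℝ) - l) * DR)
    with hm
  set M : Matrix ({x // x ∈ X} ⊕ Fin (k * u - X.card)) ({x // x ∈ X} ⊕ Fin (k * u - X.card)) ℝ :=
    fun i j => m i (e.symm j) with hM
  have hsumF : ∑ c ∈ C, F c = (X.card : ℝ) := by
    rw [hF, Finset.sum_comm, Finset.sum_congr rfl (fun x hx => hfrow x hx)]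
    simp
  have hDlt : k * u - X.card ≠ 0 → l < u := by
    intro h
    exact Nat.lt_of_mul_lt_mul_left (show k * l < k * u by omega)
  have hFeq : k * u - X.card = 0 → ∀ c ∈ C, F c = (u : ℝ) := by
    intro h0 c hc
    have hn' : X.card = k * u := by omega
    have hzero : ∑ c ∈ C, ((u : ℝ) - F c) = 0 := by
      rw [Finset.sum_sub_distrib, hsumF, Finset.sum_const, hC, hn']
      push_cast
      ring
    have := (Finset.sum_eq_zero_iff_of_nonneg
      (fun c hc => sub_nonneg.mpr (hFu c hc))).mp hzero c hc
    linarith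
  have key : ∀ (x : {x // x ∈ X}) (c : {c // c ∈ C}),
      ∑ i : Fin u, m (Sum.inl x) (c, i) = f x c := by
    intro x c
    have hFc := hFpos c c.2
    have hFcl := hFl c c.2
    have hfx := (hf01 x x.2 c c.2).1
    simp only [hm]
    rw [sum_ite_fin hlu]
    rcases eq_or_lt_of_le hlu with rfl | hlt
    · have hFequ : F (c : _) = (l : ℝ) := le_antisymm (hFu c c.2) hFcl
      rw [hFequ]
      have : (l : ℝ) ≠ 0 := by positivity
      field_simp
      ring
    · have h1 : F (c : _) ≠ 0 := ne_of_gt hFc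
      have h2 : (u : ℝ) - l ≠ 0 := by
        have : (l : ℝ) < u := by exact_mod_cast hlt
        linarith
      field_simp
      ring
  have Mds : M ∈ doublyStochastic ℝ ({x // x ∈ X} ⊕ Fin (k * u - X.card)) := by
    rw [mem_doublyStochastic_iff_sum]
    refine ⟨?_, ?_, ?_⟩
    · -- nonneg
      intro i j
      have hul : (l : ℝ) ≤ u := by exact_mod_cast hlu
      rcases i with x | r
      · simp only [hM, hm]
        have hfx := (hf01 x x.2 (e.symm j).1 (e.symm j).1.2).1
        have hFc := hFpos (e.symm j).1 (e.symm j).1.2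
        have hFcl := hFl (e.symm j).1 (e.symm j).1.2
        split_ifs
        · positivity
        · apply div_nonneg
          · apply mul_nonneg hfx; linarith
          · apply mul_nonneg hFc.le; linarith
      · simp only [hM, hm]
        have hFcu := hFu (e.symm j).1 (e.symm j).1.2
        split_ifs
        · exact le_refl 0
        · apply div_nonneg
          · linarith
          · exact mul_nonneg (by linarith) (Nat.cast_nonneg _)
    · -- row sums
      intro i
      have hre : ∑ j, M i j = ∑ p, m i p := e.symm.sum_comp (m i)
      rw [hre, Fintype.sum_prod_type]
      rcases i with x | r
      · rw [Fintype.sum_congr _ _ (fun c => key x c),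
          Finset.sum_coe_sort C (fun c => f (x : _) c)]
        exact hfrow x x.2
      · have hD0 : k * u - X.card ≠ 0 := r.pos.ne'
        have hltu : l < u := hDlt hD0
        have h2 : (u : ℝ) - l ≠ 0 := by
          have : (l : ℝ) < u := by exact_mod_cast hltu
          linarith
        have hD0' : DR ≠ 0 := by rw [hDR]; exact_mod_cast Nat.cast_ne_zero.mpr hD0
        have hDR' : DR = (k : ℝ) * u - X.card := by
          rw [hDR, Nat.cast_sub hup]; push_cast; ring
        have hsum1 : ∀ c : {c // c ∈ C}, ∑ i : Fin u, m (Sum.inr r) (c, i)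
            = ((u : ℝ) - F c) / DR := by
          intro c
          simp only [hm]
          rw [sum_ite_fin hlu]
          field_simp
          ring
        rw [Fintype.sum_congr _ _ hsum1,
          Finset.sum_coe_sort C (fun c => ((u : ℝ) - F c) / DR)]
        rw [← Finset.sum_div, Finset.sum_sub_distrib, hsumF, Finset.sum_const, hC]
        rw [div_eq_one_iff_eq hD0', hDR']
        push_cast
        ring
    · -- column sums
      intro j
      have hre : ∑ i, M i j = ∑ i, m i (e.symm j) := rfl
      rw [hre, Fintype.sum_sum_type]
      set p := e.symm j with hp
      have hcC := p.1.2
      have hFc := hFpos p.1 hcC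
      have hFcl := hFl p.1 hcC
      have hFcu := hFu p.1 hcC
      by_cases hlow' : (p.2 : ℕ) < l
      · have h1 : ∀ x : {x // x ∈ X}, m (Sum.inl x) p = f x p.1 / F p.1 := by
          intro x; simp only [hm]; rw [if_pos hlow']
        have h2 : ∀ r : Fin (k * u - X.card), m (Sum.inr r) p = 0 := by
          intro r; simp only [hm]; rw [if_pos hlow']
        rw [Fintype.sum_congr _ _ h1, Fintype.sum_congr _ _ h2]
        rw [Finset.sum_coe_sort X (fun x => f x (p.1 : _) / F p.1)]
        rw [← Finset.sum_div]
        simp only [Finset.sum_const, smul_zero]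
        rw [div_self (ne_of_gt hFc)]
        ring
      · have hltu : l < u := lt_of_le_of_lt (le_of_not_gt hlow') p.2.2
        have h2' : (u : ℝ) - l ≠ 0 := by
          have : (l : ℝ) < u := by exact_mod_cast hltu
          linarith
        have h1 : ∀ x : {x // x ∈ X}, m (Sum.inl x) p
            = f x p.1 * ((F p.1 - l) / (F p.1 * ((u : ℝ) - l))) := by
          intro x; simp only [hm]; rw [if_neg hlow']; ring
        have h2 : ∀ r : Fin (k * u - X.card), m (Sum.inr r) p
            = ((u : ℝ) - F p.1) / (((u : ℝ) - l) * DR) := by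
          intro r; simp only [hm]; rw [if_neg hlow']
        rw [Fintype.sum_congr _ _ h1, Fintype.sum_congr _ _ h2]
        rw [Finset.sum_coe_sort X (fun x => f x (p.1 : _) * ((F p.1 - l) / (F p.1 * ((u : ℝ) - l))))]
        rw [← Finset.sum_mul]
        have hsx : ∑ x ∈ X, f x (p.1 : _) = F p.1 := rfl
        rw [hsx, Finset.sum_const, Finset.card_univ, Fintype.card_fin]
        rcases Nat.eq_zero_or_pos (k * u - X.card) with hD0 | hD0
        · have hFcu' : F p.1 = (u : ℝ) := hFeq hD0 p.1 hcC
          rw [hD0, hFcu']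
          simp only [zero_smul, add_zero]
          have hu0 : (u : ℝ) ≠ 0 := by
            have : 0 < u := lt_of_lt_of_le hl hlu
            positivity
          field_simp
        · have hD0' : DR ≠ 0 := by
            rw [hDR]; exact_mod_cast Nat.cast_ne_zero.mpr hD0.ne'
          rw [nsmul_eq_mul, hDR]
          rw [← hDR]
          field_simp
          ring
  
  -- cost functional
  set q : {x // x ∈ X} → ({c // c ∈ C} × Fin u) → ℝ :=
    fun x p => ‖(x : EuclideanSpace ℝ (Fin d)) - (p.1 : EuclideanSpace ℝ (Fin d))‖ ^ 2 with hq
  set φ : Matrix ({x // x ∈ X} ⊕ Fin (k * u - X.card)) ({x // x ∈ X} ⊕ Fin (k * u - X.card)) ℝ → ℝ :=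
    fun P => ∑ x : {x // x ∈ X}, ∑ j, P (Sum.inl x) j * q x (e.symm j) with hφ
  -- cost of M is the flow cost
  have hφM : φ M = ∑ x ∈ X, ∑ c ∈ C, f x c * ‖x - c‖ ^ 2 := by
    show (∑ x : {x // x ∈ X}, ∑ j, M (Sum.inl x) j * q x (e.symm j))
        = ∑ x ∈ X, ∑ c ∈ C, f x c * ‖x - c‖ ^ 2
    have h1 : ∀ x : {x // x ∈ X},
        ∑ j, M (Sum.inl x) j * q x (e.symm j) = ∑ c ∈ C, f x c * ‖(x : EuclideanSpace ℝ (Fin d)) - c‖ ^ 2 := by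
      intro x
      have h2 : ∑ j, M (Sum.inl x) j * q x (e.symm j)
          = ∑ p : {c // c ∈ C} × Fin u, m (Sum.inl x) p * q x p :=
        e.symm.sum_comp (fun p => m (Sum.inl x) p * q x p)
      rw [h2, Fintype.sum_prod_type]
      have h3 : ∀ c : {c // c ∈ C}, ∑ i : Fin u, m (Sum.inl x) (c, i) * q x (c, i)
          = f x c * ‖(x : EuclideanSpace ℝ (Fin d)) - (c : EuclideanSpace ℝ (Fin d))‖ ^ 2 := by
        intro c
        have : ∀ i : Fin u, q x (c, i) = ‖(x : EuclideanSpace ℝ (Fin d)) - (c : EuclideanSpace ℝ (Fin d))‖ ^ 2 := fun i => rfl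
        rw [Finset.sum_congr rfl (fun i _ => by rw [this i])]
        rw [← Finset.sum_mul, key]
      rw [Fintype.sum_congr _ _ h3]
      exact Finset.sum_coe_sort C (fun c => f (x : _) c * ‖(x : EuclideanSpace ℝ (Fin d)) - c‖ ^ 2)
    rw [Fintype.sum_congr _ _ h1]
    exact Finset.sum_coe_sort X (fun x => ∑ c ∈ C, f x c * ‖x - c‖ ^ 2)
  -- Birkhoff decomposition
  obtain ⟨w, hw0, hw1, hwM⟩ := exists_eq_sum_perm_of_mem_doublyStochastic Mds
  have hMw : ∀ i j, M i j = ∑ σ : Equiv.Perm _, w σ * (σ.permMatrix ℝ) i j := by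
    intro i j
    rw [← hwM]
    simp [Matrix.sum_apply]
  have hpos : ∀ σ, 0 < w σ → ∀ i, 0 < M i (σ i) := by
    intro σ hσ i
    rw [hMw i (σ i)]
    have hterm : w σ * (σ.permMatrix ℝ) i (σ i) = w σ := by
      simp [Equiv.Perm.permMatrix, PEquiv.toMatrix_apply, Equiv.toPEquiv_apply]
    calc (0 : ℝ) < w σ := hσ
    _ = w σ * (σ.permMatrix ℝ) i (σ i) := hterm.symm
    _ ≤ ∑ σ' : Equiv.Perm _, w σ' * (σ'.permMatrix ℝ) i (σ i) := by
        apply Finset.single_le_sum (f := fun σ' => w σ' * (σ'.permMatrix ℝ) i (σ i))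
        · intro σ' _
          apply mul_nonneg (hw0 σ')
          simp only [Equiv.Perm.permMatrix, PEquiv.toMatrix_apply, Equiv.toPEquiv_apply]
          apply ite_nonneg <;> norm_num
        · exact Finset.mem_univ σ
  -- φ is linear over the decomposition
  have hφsum : φ M = ∑ σ : Equiv.Perm _, w σ * φ (σ.permMatrix ℝ) := by
    have step : ∀ x : {x // x ∈ X}, ∑ j, M (Sum.inl x) j * q x (e.symm j)
        = ∑ σ : Equiv.Perm _, w σ * ∑ j, (σ.permMatrix ℝ) (Sum.inl x) j * q x (e.symm j) := by
      intro x
      have hj : ∀ j, M (Sum.inl x) j * q x (e.symm j)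
          = ∑ σ : Equiv.Perm _, w σ * ((σ.permMatrix ℝ) (Sum.inl x) j * q x (e.symm j)) := by
        intro j
        rw [hMw (Sum.inl x) j, Finset.sum_mul]
        exact Finset.sum_congr rfl fun σ _ => by ring
      rw [Finset.sum_congr rfl fun j _ => hj j, Finset.sum_comm]
      exact Finset.sum_congr rfl fun σ _ => (Finset.mul_sum _ _ _).symm
    show (∑ x : {x // x ∈ X}, ∑ j, M (Sum.inl x) j * q x (e.symm j))
        = ∑ σ : Equiv.Perm _, w σ * ∑ x : {x // x ∈ X}, ∑ j, (σ.permMatrix ℝ) (Sum.inl x) j * q x (e.symm j)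
    rw [Finset.sum_congr rfl fun x _ => step x, Finset.sum_comm]
    exact Finset.sum_congr rfl fun σ _ => (Finset.mul_sum _ _ _).symm
  -- pick a good permutation
  have hex : ∃ σ₀, 0 < w σ₀ ∧ φ (σ₀.permMatrix ℝ) ≤ φ M := by
    by_contra hcon
    push_neg at hcon
    have hwpos : ∃ σ, 0 < w σ := by
      by_contra hall
      push_neg at hall
      have : ∀ σ, w σ = 0 := fun σ => le_antisymm (hall σ) (hw0 σ)
      rw [Finset.sum_congr rfl (fun σ _ => this σ)] at hw1
      simp at hw1
    obtain ⟨σ₁, hσ₁⟩ := hwpos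
    have hlt : (∑ σ : Equiv.Perm _, w σ * φ M) < ∑ σ : Equiv.Perm _, w σ * φ (σ.permMatrix ℝ) := by
      apply Finset.sum_lt_sum
      · intro σ _
        rcases eq_or_lt_of_le (hw0 σ) with h | h
        · rw [← h, zero_mul, zero_mul]
        · exact le_of_lt (mul_lt_mul_of_pos_left (hcon σ h) h)
      · exact ⟨σ₁, Finset.mem_univ σ₁, mul_lt_mul_of_pos_left (hcon σ₁ hσ₁) hσ₁⟩
    have hirr : φ M < φ M := by
      calc φ M = ∑ σ : Equiv.Perm _, w σ * φ M := by rw [← Finset.sum_mul, hw1, one_mul]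
      _ < ∑ σ : Equiv.Perm _, w σ * φ (σ.permMatrix ℝ) := hlt
      _ = φ M := hφsum.symm
    exact lt_irrefl _ hirr
  obtain ⟨τ, hτw, hτle⟩ := hex
  -- dummies only go to upper slots
  have hdummy : ∀ r : Fin (k * u - X.card), ¬ ((e.symm (τ (Sum.inr r))).2 : ℕ) < l := by
    intro r hcontra
    have h0 : M (Sum.inr r) (τ (Sum.inr r)) = 0 := by
      show m (Sum.inr r) (e.symm (τ (Sum.inr r))) = 0
      simp only [hm]
      rw [if_pos hcontra]
    have := hpos τ hτw (Sum.inr r)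
    rw [h0] at this
    exact lt_irrefl _ this
  
  -- the assignment
  set ctr : {x // x ∈ X} → EuclideanSpace ℝ (Fin d) :=
    fun x => ((e.symm (τ (Sum.inl x))).1 : EuclideanSpace ℝ (Fin d)) with hctr
  set σa : EuclideanSpace ℝ (Fin d) → EuclideanSpace ℝ (Fin d) :=
    fun y => if h : y ∈ X then ctr ⟨y, h⟩ else y with hσa
  have hσax : ∀ x : {x // x ∈ X}, σa (x : EuclideanSpace ℝ (Fin d)) = ctr x := by
    intro x
    simp only [hσa]
    rw [dif_pos x.2]
  have hmem : ∀ x ∈ X, σa x ∈ C := by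
    intro x hx
    rw [show σa x = ctr ⟨x, hx⟩ by simp only [hσa]; rw [dif_pos hx]]
    exact (e.symm (τ (Sum.inl ⟨x, hx⟩))).1.2
  have hcount : ∀ c ∈ C, (X.filter (fun y => σa y = c)).card
      = (Finset.univ.filter (fun x : {x // x ∈ X} => ctr x = c)).card := by
    intro c hc
    rw [← Finset.card_image_of_injective
      (Finset.univ.filter (fun x : {x // x ∈ X} => ctr x = c)) Subtype.val_injective]
    congr 1
    ext y
    simp only [Finset.mem_filter, Finset.mem_image, Finset.mem_univ, true_and]
    constructor
    · rintro ⟨hy, hcy⟩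
      refine ⟨⟨y, hy⟩, ?_, rfl⟩
      rw [← hσax ⟨y, hy⟩]
      exact hcy
    · rintro ⟨x, hcx, rfl⟩
      exact ⟨x.2, (hσax x).trans hcx⟩
  have hupper : ∀ c ∈ C, (Finset.univ.filter (fun x : {x // x ∈ X} => ctr x = c)).card ≤ u := by
    intro c hc
    have hinj : Set.InjOn (fun x : {x // x ∈ X} => e.symm (τ (Sum.inl x)))
        (Finset.univ.filter (fun x : {x // x ∈ X} => ctr x = c)) := by
      intro a _ b _ hab
      exact Sum.inl_injective (τ.injective (e.symm.injective hab))
    have hsub : ∀ x ∈ Finset.univ.filter (fun x : {x // x ∈ X} => ctr x = c),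
        e.symm (τ (Sum.inl x)) ∈ Finset.univ.filter
          (fun p : {c // c ∈ C} × Fin u => (p.1 : EuclideanSpace ℝ (Fin d)) = c) := by
      intro x hx
      simp only [Finset.mem_filter, Finset.mem_univ, true_and] at hx ⊢
      exact hx
    have hcardT : (Finset.univ.filter
        (fun p : {c // c ∈ C} × Fin u => (p.1 : EuclideanSpace ℝ (Fin d)) = c)).card = u := by
      have hTeq : Finset.univ.filter
          (fun p : {c // c ∈ C} × Fin u => (p.1 : EuclideanSpace ℝ (Fin d)) = c)
          = ({(⟨c, hc⟩ : {c // c ∈ C})} : Finset {c // c ∈ C}) ×ˢ (Finset.univ : Finset (Fin u)) := by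
        ext p
        rw [Finset.mem_product]
        simp only [Finset.mem_filter, Finset.mem_univ, true_and, and_true, Finset.mem_singleton]
        exact ⟨fun h => Subtype.ext h, fun h => by rw [h]⟩
      rw [hTeq, Finset.card_product, Finset.card_singleton, Finset.card_univ,
        Fintype.card_fin, one_mul]
    calc (Finset.univ.filter (fun x : {x // x ∈ X} => ctr x = c)).card
        ≤ (Finset.univ.filter
            (fun p : {c // c ∈ C} × Fin u => (p.1 : EuclideanSpace ℝ (Fin d)) = c)).card :=
          Finset.card_le_card_of_injOn _ hsub hinj
    _ = u := hcardT
  have hlower : ∀ c (hc : c ∈ C),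
      l ≤ (Finset.univ.filter (fun x : {x // x ∈ X} => ctr x = c)).card := by
    intro c hc
    have hslot : ∀ i : Fin l, ∃ x : {x // x ∈ X},
        τ (Sum.inl x) = e (⟨c, hc⟩, Fin.castLE hlu i) := by
      intro i
      rcases hinv : τ.symm (e (⟨c, hc⟩, Fin.castLE hlu i)) with x | r
      · exact ⟨x, by rw [← hinv, Equiv.apply_symm_apply]⟩
      · exfalso
        apply hdummy r
        have hτr : τ (Sum.inr r) = e (⟨c, hc⟩, Fin.castLE hlu i) :=
          ((Equiv.symm_apply_eq τ).mp hinv).symm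
        rw [hτr, Equiv.symm_apply_apply]
        simpa using i.2
    choose g hg using hslot
    have hginj : Set.InjOn g (Finset.univ : Finset (Fin l)) := by
      intro a _ b _ hab
      have h1 : τ (Sum.inl (g a)) = τ (Sum.inl (g b)) := by rw [hab]
      rw [hg a, hg b] at h1
      have h2 := e.injective h1
      have h3 := congrArg Prod.snd h2
      simp only at h3
      exact Fin.castLE_injective hlu h3
    have hgmem : ∀ i ∈ (Finset.univ : Finset (Fin l)),
        g i ∈ Finset.univ.filter (fun x : {x // x ∈ X} => ctr x = c) := by
      intro i _
      simp only [Finset.mem_filter, Finset.mem_univ, true_and]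
      show ((e.symm (τ (Sum.inl (g i)))).1 : EuclideanSpace ℝ (Fin d)) = c
      rw [hg i, Equiv.symm_apply_apply]
    calc l = (Finset.univ : Finset (Fin l)).card := by simp
    _ ≤ _ := Finset.card_le_card_of_injOn g hgmem hginj
  have hφτ : φ (τ.permMatrix ℝ) = ∑ x : {x // x ∈ X}, q x (e.symm (τ (Sum.inl x))) := by
    show (∑ x : {x // x ∈ X}, ∑ j, (τ.permMatrix ℝ) (Sum.inl x) j * q x (e.symm j)) = _
    refine Fintype.sum_congr _ _ fun x => ?_
    simp [Equiv.Perm.permMatrix, PEquiv.toMatrix_apply, Equiv.toPEquiv_apply, ite_mul, one_mul,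
      zero_mul, Finset.sum_ite_eq, Finset.mem_univ]
  have hcost : ∑ x ∈ X, ‖x - σa x‖ ^ 2 = φ (τ.permMatrix ℝ) := by
    rw [hφτ, ← Finset.sum_coe_sort X (fun x => ‖x - σa x‖ ^ 2)]
    refine Fintype.sum_congr _ _ fun x => ?_
    rw [hσax x]
  refine ⟨σa, ⟨hmem, ?_⟩, ?_⟩
  · intro c hc
    rw [hcount c hc]
    exact ⟨hlower c hc, hupper c hc⟩
  · rw [hcost, ← hφM]
    exact hτle


/-- The optimal balanced assignment cost equals the minimum cost of a flow of
value `|X|` in the balanced-clustering network. -/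
theorem min_balanced_assignment_eq_min_cost_flow {d k : ℕ}
    (X C : Finset (EuclideanSpace ℝ (Fin d))) (hC : C.card = k)
    (l u : ℕ) (hl : 0 < l) (hlu : l ≤ u)
    (hlow : k * l ≤ X.card) (hup : X.card ≤ k * u) :
    sInf {r : ℝ | ∃ σ, IsFeasibleAssignment X C l u σ ∧
        r = ∑ x ∈ X, ‖x - σ x‖ ^ 2} =
      sInf {r : ℝ | ∃ f, IsFeasibleFlow X C l u f ∧
        r = ∑ x ∈ X, ∑ c ∈ C, f x c * ‖x - c‖ ^ 2} := by
  classical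
  set A := {r : ℝ | ∃ σ, IsFeasibleAssignment X C l u σ ∧
      r = ∑ x ∈ X, ‖x - σ x‖ ^ 2} with hA
  set B := {r : ℝ | ∃ f, IsFeasibleFlow X C l u f ∧
      r = ∑ x ∈ X, ∑ c ∈ C, f x c * ‖x - c‖ ^ 2} with hB
  -- every assignment gives a flow of the same cost
  have hAsubB : A ⊆ B := by
    rintro r ⟨σ, ⟨hσ1, hσ2⟩, rfl⟩
    refine ⟨fun y c => if σ y = c then 1 else 0, ⟨?_, ?_, ?_⟩, ?_⟩
    · intro x hx c hc
      simp only
      split_ifs <;> norm_num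
    · intro x hx
      rw [Finset.sum_ite_eq C (σ x) (fun _ => (1 : ℝ)), if_pos (hσ1 x hx)]
    · intro c hc
      have hcount : ∑ x ∈ X, (if σ x = c then (1 : ℝ) else 0)
          = ((X.filter (fun x => σ x = c)).card : ℝ) := by
        rw [Finset.sum_ite, Finset.sum_const, Finset.sum_const]
        simp
      rw [hcount]
      exact ⟨Nat.cast_le.mpr (hσ2 c hc).1, Nat.cast_le.mpr (hσ2 c hc).2⟩
    · refine Finset.sum_congr rfl fun x hx => ?_
      rw [Finset.sum_congr rfl (fun c _ => by rw [ite_mul, one_mul, zero_mul]),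
        Finset.sum_ite_eq C (σ x) (fun c => ‖x - c‖ ^ 2), if_pos (hσ1 x hx)]
  have hBdd : ∀ r ∈ B, (0 : ℝ) ≤ r := by
    rintro r ⟨f, ⟨hf01, _, _⟩, rfl⟩
    apply Finset.sum_nonneg
    intro x hx
    apply Finset.sum_nonneg
    intro c hc
    exact mul_nonneg (hf01 x hx c hc).1 (by positivity)
  have hBbdd : BddBelow B := ⟨0, fun r hr => hBdd r hr⟩
  have hAbdd : BddBelow A := ⟨0, fun r hr => hBdd r (hAsubB hr)⟩
  rcases X.eq_empty_or_nonempty with hXe | hX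
  · -- degenerate case : X is empty, hence C is empty
    have hk0 : k = 0 := by
      rw [hXe] at hlow
      simp only [Finset.card_empty, Nat.le_zero, Nat.mul_eq_zero] at hlow
      omega
    have hCe : C = ∅ := by
      rw [hk0] at hC
      exact Finset.card_eq_zero.mp hC
    have hAeq : A = {0} := by
      apply Set.eq_singleton_iff_unique_mem.mpr
      constructor
      · refine ⟨id, ⟨?_, ?_⟩, ?_⟩
        · intro x hx; rw [hXe] at hx; exact absurd hx (Finset.notMem_empty x)
        · intro c hc; rw [hCe] at hc; exact absurd hc (Finset.notMem_empty c)
        · rw [hXe]; simp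
      · rintro r ⟨σ, hσ, rfl⟩
        rw [hXe]; simp
    have hBeq : B = {0} := by
      apply Set.eq_singleton_iff_unique_mem.mpr
      constructor
      · refine ⟨fun _ _ => 0, ⟨?_, ?_, ?_⟩, ?_⟩
        · intro x hx; rw [hXe] at hx; exact absurd hx (Finset.notMem_empty x)
        · intro x hx; rw [hXe] at hx; exact absurd hx (Finset.notMem_empty x)
        · intro c hc; rw [hCe] at hc; exact absurd hc (Finset.notMem_empty c)
        · rw [hXe]; simp
      · rintro r ⟨f, hf, rfl⟩
        rw [hXe]; simp
    rw [hAeq, hBeq]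
  · -- main case
    have hk : 0 < k := by
      rcases Nat.eq_zero_or_pos k with rfl | h
      · simp only [Nat.zero_mul] at hup
        exact absurd (Finset.card_eq_zero.mp (Nat.le_zero.mp hup)) hX.ne_empty
      · exact h
    have hkR : (0 : ℝ) < k := by exact_mod_cast hk
    have hBne : B.Nonempty := by
      refine ⟨∑ x ∈ X, ∑ c ∈ C, (k : ℝ)⁻¹ * ‖x - c‖ ^ 2, fun _ _ => (k : ℝ)⁻¹, ⟨?_, ?_, ?_⟩, rfl⟩
      · intro x hx c hc
        constructor
        · positivity
        · rw [inv_le_one_iff₀]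
          right
          exact_mod_cast hk
      · intro x hx
        rw [Finset.sum_const, hC, nsmul_eq_mul, mul_inv_cancel₀ (ne_of_gt hkR)]
      · intro c hc
        rw [Finset.sum_const, nsmul_eq_mul]
        constructor
        · rw [le_mul_inv_iff₀ hkR]
          calc (l : ℝ) * k = ((k * l : ℕ) : ℝ) := by push_cast; ring
          _ ≤ (X.card : ℝ) := by exact_mod_cast hlow
        · rw [mul_inv_le_iff₀ hkR]
          calc (X.card : ℝ) ≤ ((k * u : ℕ) : ℝ) := by exact_mod_cast hup
          _ = (u : ℝ) * k := by push_cast; ring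
    have hAne : A.Nonempty := by
      obtain ⟨r, f, hf, hr⟩ := hBne
      obtain ⟨σ, hσ, _⟩ := rounding X C hC l u hl hlu hlow hup hX f hf
      exact ⟨_, σ, hσ, rfl⟩
    apply le_antisymm
    · apply le_csInf hBne
      rintro r ⟨f, hf, rfl⟩
      obtain ⟨σ, hσ, hle⟩ := rounding X C hC l u hl hlu hlow hup hX f hf
      exact le_trans (csInf_le hAbdd ⟨σ, hσ, rfl⟩) hle
    · apply le_csInf hAne
      intro r hr
      exact csInf_le hBbdd (hAsubB hr)
end

section
/- Main approximation guarantee: let X be a (ln m / m)-balanced instance of variance-based k-clustering with optimum OPT = ∑_i ∑_{x∈X_i*} ‖x − c(X_i*)‖². Suppose an m-draw uniform sample S satisfies: (a) for each i, |S_i| ≥ (1−η)·m·p(i) where p(i) = |X_i*|/n and p(i) ≥ ln m / m, and (b) for each i, ‖c(S_i) − c(X_i*)‖² ≤ (1/(δ|S_i|))·(1/|X_i*|)∑_{x∈X_i*}‖x − c(X_i*)‖². Then the Voronoi partition {X_i'} of X with respect to centers {c(S_i)} satisfies ∑_i ∑_{x∈X_i'} ‖x − c(X_i')‖² ≤ (1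 + 1/((1−η)·δ·ln m))·OPT. -/
open scoped Classical

lemma recenter_sum {d : ℕ} (T : Finset (EuclideanSpace ℝ (Fin d)))
    (c : EuclideanSpace ℝ (Fin d)) :
    ∑ x ∈ T, ‖x - c‖ ^ 2 =
      ∑ x ∈ T, ‖x - ((T.card : ℝ)⁻¹ • ∑ y ∈ T, y)‖ ^ 2 +
        (T.card : ℝ) * ‖((T.card : ℝ)⁻¹ • ∑ y ∈ T, y) - c‖ ^ 2 := by
  rcases T.eq_empty_or_nonempty with rfl | hT
  · simp
  set μ : EuclideanSpace ℝ (Fin d) := (T.card : ℝ)⁻¹ • ∑ y ∈ T, y with hμdef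
  have hc0 : (T.card : ℝ) ≠ 0 := by
    exact_mod_cast (Finset.card_pos.mpr hT).ne'
  have hμ : ∑ x ∈ T, (x - μ) = 0 := by
    rw [Finset.sum_sub_distrib, Finset.sum_const, hμdef]
    rw [← Nat.cast_smul_eq_nsmul ℝ, smul_smul, mul_inv_cancel₀ hc0, one_smul, sub_self]
  have key : ∀ x ∈ T, ‖x - c‖ ^ 2 =
      ‖x - μ‖ ^ 2 + (2 * inner ℝ (x - μ) (μ - c) + ‖μ - c‖ ^ 2) := by
    intro x _
    have : x - c = (x - μ) + (μ - c) := by abel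
    rw [this, norm_add_sq_real]; ring
  rw [Finset.sum_congr rfl key, Finset.sum_add_distrib, Finset.sum_add_distrib]
  have h1 : ∑ x ∈ T, (2 : ℝ) * inner ℝ (x - μ) (μ - c) = 0 := by
    rw [← Finset.mul_sum, ← sum_inner, hμ]
    simp
  rw [h1, Finset.sum_const, zero_add, nsmul_eq_mul]

set_option maxHeartbeats 800000

/-- Main approximation guarantee (deterministic core of the paper's main
theorem): for a `(ln m / m)`-balanced instance with optimal clustering
`{Xs i}`, if the sample clusters `S i` satisfy the size bound (a) and the
sample-mean error bound (b), then the Voronoi partition of `X` with respect to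
the sample means `cS i` has cost at most
`(1 + 1/((1−η)·δ·ln m))` times the optimum. -/
theorem random_sampling_main {d k m n : ℕ} (hm : 2 ≤ m)
    (X : Finset (EuclideanSpace ℝ (Fin d))) (hX : X.Nonempty) (hn : X.card = n)
    -- the optimal clustering {Xs i}, a partition of X
    (Xs : Fin k → Finset (EuclideanSpace ℝ (Fin d)))
    (hsub : ∀ i, Xs i ⊆ X) (hpart : ∀ x ∈ X, ∃! i : Fin k, x ∈ Xs i)
    (hopt : ∀ Ys : Fin k → Finset (EuclideanSpace ℝ (Fin d)),
      (∀ i, Ys i ⊆ X) → (∀ x ∈ X, ∃! i : Fin k, x ∈ Ys i) →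
      ∑ i : Fin k, ∑ x ∈ Xs i,
          ‖x - (((Xs i).card : ℝ)⁻¹ • ∑ y ∈ Xs i, y)‖ ^ 2 ≤
        ∑ i : Fin k, ∑ x ∈ Ys i,
          ‖x - (((Ys i).card : ℝ)⁻¹ • ∑ y ∈ Ys i, y)‖ ^ 2)
    -- the instance is (ln m / m)-balanced
    (hbal : ∀ i, Real.log m / m ≤ ((Xs i).card : ℝ) / n)
    -- the sampled points falling in each optimal cluster, and their means
    (S : Fin k → Multiset (EuclideanSpace ℝ (Fin d)))
    (hS : ∀ i, ∀ x ∈ S i, x ∈ Xs i)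
    (δ η : ℝ) (hδ0 : 0 < δ) (hδ1 : δ < 1) (hη0 : 0 < η) (hη1 : η < 1)
    (cS : Fin k → EuclideanSpace ℝ (Fin d))
    (hcS : ∀ i, cS i = (((S i).card : ℝ))⁻¹ • (S i).sum)
    (cXs : Fin k → EuclideanSpace ℝ (Fin d))
    (hcXs : ∀ i, cXs i = (((Xs i).card : ℝ))⁻¹ • ∑ y ∈ Xs i, y)
    -- event (a): sample cluster sizes
    (ha : ∀ i, (1 - η) * m * (((Xs i).card : ℝ) / n) ≤ ((S i).card : ℝ))
    -- event (b): sample-mean error bounds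
    (hb : ∀ i, ‖cS i - cXs i‖ ^ 2 ≤
      (δ * ((S i).card : ℝ))⁻¹ *
        (((Xs i).card : ℝ)⁻¹ * ∑ x ∈ Xs i, ‖x - cXs i‖ ^ 2))
    -- the Voronoi partition {X' i} of X w.r.t. the centers cS i
    (a : EuclideanSpace ℝ (Fin d) → Fin k)
    (hvor : ∀ x ∈ X, ∀ j : Fin k, ‖x - cS (a x)‖ ≤ ‖x - cS j‖) :
    ∑ i : Fin k, ∑ x ∈ X.filter (fun y => a y = i),
        ‖x - (((X.filter (fun y => a y = i)).card : ℝ)⁻¹ •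
          ∑ y ∈ X.filter (fun z => a z = i), y)‖ ^ 2 ≤
      (1 + ((1 - η) * δ * Real.log m)⁻¹) *
        ∑ i : Fin k, ∑ x ∈ Xs i, ‖x - cXs i‖ ^ 2 := by
  have hlog : 0 < Real.log m := Real.log_pos (by exact_mod_cast hm)
  have hm0 : (0:ℝ) < m := by positivity
  have hn0 : (0:ℝ) < n := by
    have : 0 < X.card := Finset.card_pos.mpr hX
    exact_mod_cast hn ▸ this
  have hη' : (0:ℝ) < 1 - η := by linarith
  -- per-cluster facts
  have hcard : ∀ i, (0:ℝ) < ((Xs i).card : ℝ) := by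
    intro i
    have h1 : (0:ℝ) < Real.log m / m := by positivity
    have h2 := lt_of_lt_of_le h1 (hbal i)
    rcases div_pos_iff.mp h2 with h | h
    · exact h.1
    · exact absurd h.2 (not_lt.mpr hn0.le)
  have hScard : ∀ i, (1 - η) * Real.log m ≤ ((S i).card : ℝ) := by
    intro i
    refine le_trans ?_ (ha i)
    have h1 : Real.log m / m ≤ ((Xs i).card : ℝ) / n := hbal i
    have h2 : (1 - η) * m * (Real.log m / m) ≤ (1 - η) * m * (((Xs i).card : ℝ) / n) :=
      mul_le_mul_of_nonneg_left h1 (by positivity)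
    have h3 : (1 - η) * m * (Real.log m / m) = (1 - η) * Real.log m := by
      field_simp
    linarith
  have hS0 : ∀ i, (0:ℝ) < ((S i).card : ℝ) := fun i =>
    lt_of_lt_of_le (by positivity) (hScard i)
  set V : Fin k → ℝ := fun i => ∑ x ∈ Xs i, ‖x - cXs i‖ ^ 2 with hV
  have hV0 : ∀ i, 0 ≤ V i := fun i => Finset.sum_nonneg fun x _ => by positivity
  set C : ℝ := ((1 - η) * δ * Real.log m)⁻¹ with hC
  -- Step A: centroid lemma on each Voronoi cell
  have stepA : ∑ i : Fin k, ∑ x ∈ X.filter (fun y => a y = i),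
        ‖x - (((X.filter (fun y => a y = i)).card : ℝ)⁻¹ •
          ∑ y ∈ X.filter (fun z => a z = i), y)‖ ^ 2 ≤
      ∑ i : Fin k, ∑ x ∈ X.filter (fun y => a y = i), ‖x - cS i‖ ^ 2 := by
    refine Finset.sum_le_sum fun i _ => ?_
    rw [recenter_sum (X.filter (fun y => a y = i)) (cS i)]
    have : (0:ℝ) ≤ ((X.filter (fun y => a y = i)).card : ℝ) *
        ‖(((X.filter (fun y => a y = i)).card : ℝ)⁻¹ •
          ∑ y ∈ X.filter (fun z => a z = i), y) - cS i‖ ^ 2 := by positivity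
    linarith
  -- Step B: fiberwise sum
  have stepB : ∑ i : Fin k, ∑ x ∈ X.filter (fun y => a y = i), ‖x - cS i‖ ^ 2 =
      ∑ x ∈ X, ‖x - cS (a x)‖ ^ 2 := by
    rw [← Finset.sum_fiberwise X a (fun x => ‖x - cS (a x)‖ ^ 2)]
    refine Finset.sum_congr rfl fun i _ => Finset.sum_congr rfl fun x hx => ?_
    rw [(Finset.mem_filter.mp hx).2]
  -- Step C: partition sum
  have stepC : ∑ x ∈ X, ‖x - cS (a x)‖ ^ 2 =
      ∑ i : Fin k, ∑ x ∈ Xs i, ‖x - cS (a x)‖ ^ 2 := by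
    have : ∀ i, ∑ x ∈ Xs i, ‖x - cS (a x)‖ ^ 2 =
        ∑ x ∈ X, if x ∈ Xs i then ‖x - cS (a x)‖ ^ 2 else 0 := by
      intro i
      rw [Finset.sum_ite_mem, Finset.inter_comm, ← Finset.sum_ite_mem]
      exact Finset.sum_congr rfl fun x hx => (if_pos (hsub i hx)).symm
    rw [Finset.sum_congr rfl fun i _ => this i, Finset.sum_comm]
    refine Finset.sum_congr rfl fun x hx => ?_
    obtain ⟨i, hi, huniq⟩ := hpart x hx
    rw [Finset.sum_eq_single i (fun j _ hj => if_neg fun hmem => hj (huniq j hmem))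
      (fun h => absurd (Finset.mem_univ i) h)]
    exact (if_pos hi).symm
  -- Step D: Voronoi optimality pointwise
  have stepD : ∑ i : Fin k, ∑ x ∈ Xs i, ‖x - cS (a x)‖ ^ 2 ≤
      ∑ i : Fin k, ∑ x ∈ Xs i, ‖x - cS i‖ ^ 2 :=
    Finset.sum_le_sum fun i _ => Finset.sum_le_sum fun x hx =>
      pow_le_pow_left₀ (norm_nonneg _) (hvor x (hsub i hx) i) 2
  -- Step E + F: recentering and error bound
  have stepEF : ∀ i, ∑ x ∈ Xs i, ‖x - cS i‖ ^ 2 ≤ V i + C * V i := by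
    intro i
    have hrec := recenter_sum (Xs i) (cS i)
    rw [← hcXs i] at hrec
    have hVi : ∑ x ∈ Xs i, ‖x - cXs i‖ ^ 2 = V i := rfl
    rw [hVi] at hrec
    have hnorm : ‖cXs i - cS i‖ ^ 2 = ‖cS i - cXs i‖ ^ 2 := by
      rw [norm_sub_rev]
    have herr : ((Xs i).card : ℝ) * ‖cXs i - cS i‖ ^ 2 ≤ C * V i := by
      rw [hnorm]
      have h1 : ((Xs i).card : ℝ) * ‖cS i - cXs i‖ ^ 2 ≤
          ((Xs i).card : ℝ) * ((δ * ((S i).card : ℝ))⁻¹ *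
            (((Xs i).card : ℝ)⁻¹ * V i)) :=
        mul_le_mul_of_nonneg_left (hb i) (hcard i).le
      have h2 : ((Xs i).card : ℝ) * ((δ * ((S i).card : ℝ))⁻¹ *
          (((Xs i).card : ℝ)⁻¹ * V i)) = (δ * ((S i).card : ℝ))⁻¹ * V i := by
        have hne : ((Xs i).card : ℝ) ≠ 0 := (hcard i).ne'
        rw [show ((Xs i).card : ℝ) * ((δ * ((S i).card : ℝ))⁻¹ *
            (((Xs i).card : ℝ)⁻¹ * V i)) =
            (((Xs i).card : ℝ) * (((Xs i).card : ℝ))⁻¹) *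
              ((δ * ((S i).card : ℝ))⁻¹ * V i) from by ring,
          mul_inv_cancel₀ hne, one_mul]
      have h3 : (δ * ((S i).card : ℝ))⁻¹ ≤ C := by
        rw [hC]
        apply inv_anti₀ (by positivity)
        calc (1 - η) * δ * Real.log m = δ * ((1 - η) * Real.log m) := by ring
          _ ≤ δ * ((S i).card : ℝ) := mul_le_mul_of_nonneg_left (hScard i) hδ0.le
      have h4 : (δ * ((S i).card : ℝ))⁻¹ * V i ≤ C * V i :=
        mul_le_mul_of_nonneg_right h3 (hV0 i)
      linarith
    linarith
  calc ∑ i : Fin k, ∑ x ∈ X.filter (fun y => a y = i),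
        ‖x - (((X.filter (fun y => a y = i)).card : ℝ)⁻¹ •
          ∑ y ∈ X.filter (fun z => a z = i), y)‖ ^ 2
      ≤ ∑ i : Fin k, ∑ x ∈ X.filter (fun y => a y = i), ‖x - cS i‖ ^ 2 := stepA
    _ = ∑ x ∈ X, ‖x - cS (a x)‖ ^ 2 := stepB
    _ = ∑ i : Fin k, ∑ x ∈ Xs i, ‖x - cS (a x)‖ ^ 2 := stepC
    _ ≤ ∑ i : Fin k, ∑ x ∈ Xs i, ‖x - cS i‖ ^ 2 := stepD
    _ ≤ ∑ i : Fin k, (V i + C * V i) := Finset.sum_le_sum fun i _ => stepEF i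
    _ = (1 + C) * ∑ i : Fin k, V i := by
        rw [Finset.mul_sum]
        exact Finset.sum_congr rfl fun i _ => by ring
end
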